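/- arXiv:1003.1843 — 2 statements merged into one kernel-verified Lean document; each statement's English description precedes it below -/
import Mathlib

section
/- Let {γ_n}, {a_n}, {b_n} be sequences in PSL(2,ℂ). Suppose {a_n} converges to a loxodromic (hyperbolic) isometry a_∞ and {b_n} converges to a loxodromic isometry b_∞ such that a_∞ and b_∞ have no common fixed point on the sphere at infinity, and suppose the sequences {γ_n a_n γ_n^{-1}} and {γ_n b_n γ_n^{-1}} both converge in PSL(2,ℂ). Then some subsequence of {γ_n} converges in PSL(2,ℂ). -/
/-!
STATEMENT 0.  If sequences `aₙ → a∞`, `bₙ → b∞` in `PSL(2,ℂ)` with `a∞`, `b∞`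
loxodromic without a common fixed point on the sphere at infinity, and the
conjugated sequences `γₙ aₙ γₙ⁻¹`, `γₙ bₙ γₙ⁻¹` both converge, then a
subsequence of `γₙ` converges.

Here `PSL(2,ℂ)` is realized as `SL(2,ℂ)/center`; fixed points on the sphere at
infinity `Ĉ = ℙ¹(ℂ)` correspond to eigenlines of a lift, and an element is
loxodromic iff a lift has an eigenvalue of modulus `> 1`.
-/

open Matrix Filter Topology

abbrev SL2C := Matrix.SpecialLinearGroup (Fin 2) ℂ

noncomputable instance : TopologicalSpace SL2C :=
  show TopologicalSpace {A : Matrix (Fin 2) (Fin 2) ℂ // A.det = 1} from inferInstance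

/-- `PSL(2,ℂ)`, the group of orientation-preserving isometries of `ℍ³`. -/
abbrev PSL2C := SL2C ⧸ Subgroup.center SL2C

/-- `v` is an eigenvector of (the matrix of) `A` with eigenvalue `l`. -/
def SL2C.eigen (A : SL2C) (l : ℂ) (v : Fin 2 → ℂ) : Prop :=
  (A : Matrix (Fin 2) (Fin 2) ℂ).mulVec v = l • v

/-- An element of `PSL(2,ℂ)` is loxodromic (hyperbolic) if some (equivalently,
any) lift to `SL(2,ℂ)` has an eigenvalue of modulus `> 1`: it then has exactly
two fixed points on the sphere at infinity and translates along the geodesic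
joining them. -/
def IsLoxodromic (g : PSL2C) : Prop :=
  ∃ A : SL2C, (A : PSL2C) = g ∧
    ∃ l : ℂ, 1 < ‖l‖ ∧ ∃ v : Fin 2 → ℂ, v ≠ 0 ∧ SL2C.eigen A l v

/-- A nonzero vector `v` represents a fixed point of `g` on the sphere at
infinity `Ĉ = ℙ¹(ℂ)` iff it is an eigenvector of a lift of `g`. -/
def IsFixedDir (g : PSL2C) (v : Fin 2 → ℂ) : Prop :=
  v ≠ 0 ∧ ∃ A : SL2C, (A : PSL2C) = g ∧ ∃ l : ℂ, SL2C.eigen A l v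

/- ### Auxiliary material for the proof -/
attribute [local instance] Matrix.normedAddCommGroup Matrix.normedSpace

lemma cont_val : Continuous ((↑) : SL2C → Matrix (Fin 2) (Fin 2) ℂ) := continuous_subtype_val

instance : ContinuousMul SL2C := by
  constructor
  apply continuous_induced_rng.mpr
  show Continuous fun p : SL2C × SL2C => ((p.1 * p.2 : SL2C) : Matrix (Fin 2) (Fin 2) ℂ)
  simp only [Matrix.SpecialLinearGroup.coe_mul]
  exact (cont_val.comp continuous_fst).mul (cont_val.comp continuous_snd)

instance : ContinuousInv SL2C := by
  constructor
  apply continuous_induced_rng.mpr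
  show Continuous fun A : SL2C => ((A⁻¹ : SL2C) : Matrix (Fin 2) (Fin 2) ℂ)
  have : Continuous fun A : SL2C => ((A : Matrix (Fin 2) (Fin 2) ℂ)).adjugate :=
    cont_val.matrix_adjugate
  have h2 : (fun A : SL2C => ((A⁻¹ : SL2C) : Matrix (Fin 2) (Fin 2) ℂ))
      = fun A : SL2C => ((A : Matrix (Fin 2) (Fin 2) ℂ)).adjugate :=
    funext fun A => Matrix.SpecialLinearGroup.coe_inv A
  rw [h2]; exact this

instance : IsTopologicalGroup SL2C := ⟨⟩

abbrev M2 := Matrix (Fin 2) (Fin 2) ℂ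

lemma mem_center_iff' {Z : SL2C} :
    Z ∈ Subgroup.center SL2C ↔ (Z : M2) = 1 ∨ (Z : M2) = -1 := by
  rw [Matrix.SpecialLinearGroup.mem_center_iff]
  constructor
  · rintro ⟨r, hr, hs⟩
    rw [Fintype.card_fin, pow_two, mul_self_eq_one_iff] at hr
    rcases hr with h | h
    · left; rw [← hs, h]; simp
    · right; rw [← hs, h]; simp [Matrix.scalar_apply, ← Matrix.diagonal_neg,
        Matrix.diagonal_one]
  · rintro (h | h)
    · exact ⟨1, by simp, by simp [h]⟩
    · exact ⟨-1, by simp [Fintype.card_fin], by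
        simp [Matrix.scalar_apply, h, ← Matrix.diagonal_neg, Matrix.diagonal_one]⟩

lemma coe_eq_coe {A B : SL2C} :
    (A : PSL2C) = (B : PSL2C) ↔ (A : M2) = B ∨ (A : M2) = -(B : M2) := by
  rw [QuotientGroup.eq]
  rw [mem_center_iff']
  have hv : ((A⁻¹ * B : SL2C) : M2) = (A : M2)⁻¹ * B := by
    rw [Matrix.SpecialLinearGroup.coe_mul, Matrix.SpecialLinearGroup.coe_inv,
      Matrix.inv_def, A.prop]
    simp
  have hAinv : IsUnit (A : M2).det := by rw [A.prop]; exact isUnit_one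
  rw [hv]
  constructor
  · rintro (h | h)
    · left
      have := congrArg (fun M => (A : M2) * M) h
      simpa [← Matrix.mul_assoc, Matrix.mul_nonsing_inv _ hAinv] using this.symm
    · right
      have := congrArg (fun M => (A : M2) * M) h
      have h2 : -(A : M2) = (B : M2) := by
        simpa [← Matrix.mul_assoc, Matrix.mul_nonsing_inv _ hAinv] using this.symm
      rw [← h2, neg_neg]
  · rintro (h | h)
    · left; rw [← h, Matrix.nonsing_inv_mul _ hAinv]
    · right
      have h2 : (B : M2) = -(A : M2) := by rw [h, neg_neg]
      rw [h2, Matrix.mul_neg, Matrix.nonsing_inv_mul _ hAinv]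

lemma sl2c_val_ne_zero (A : SL2C) : (A : M2) ≠ 0 := by
  intro h
  have := A.prop
  rw [h] at this
  simp at this

lemma lift_tendsto (x : ℕ → PSL2C) (ℓ : PSL2C) (hx : Tendsto x atTop (𝓝 ℓ)) :
    ∃ L : SL2C, (L : PSL2C) = ℓ ∧ ∃ X : ℕ → SL2C,
      (∀ n, (X n : PSL2C) = x n) ∧ Tendsto X atTop (𝓝 L) := by
  obtain ⟨L, hL⟩ := QuotientGroup.mk_surjective ℓ
  refine ⟨L, hL, ?_⟩
  have hLpos : 0 < ‖(L : M2)‖ := norm_pos_iff.mpr (sl2c_val_ne_zero L)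
  set r : ℝ := ‖(L : M2)‖ / 2 with hr
  have hrpos : 0 < r := by positivity
  set U : Set SL2C := {A | ‖(A : M2) - (L : M2)‖ < r} with hU
  have hUopen : IsOpen U := by
    have : U = ((↑) : SL2C → M2) ⁻¹' (Metric.ball (L : M2) r) := by
      ext A; show ‖(A : M2) - (L : M2)‖ < r ↔ dist (A : M2) (L : M2) < r; rw [dist_eq_norm]
    rw [this]
    exact Metric.isOpen_ball.preimage cont_val
  have hLU : L ∈ U := by simp [hU, hrpos]
  have key : ∀ A ∈ U, ∀ B ∈ U, (A : PSL2C) = (B : PSL2C) → A = B := by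
    intro A hA B hB hAB
    rcases coe_eq_coe.mp hAB with h | h
    · exact Subtype.ext h
    · exfalso
      have h2 : (2 : ℝ) * ‖(L : M2)‖ = ‖((L : M2) - (A : M2)) + ((L : M2) - (B : M2))‖ := by
        have : ((L : M2) - (A : M2)) + ((L : M2) - (B : M2)) = 2 • (L : M2) := by
          rw [h]; abel
        rw [this, two_smul, ← two_smul ℝ, norm_smul]
        simp
      have h3 : (2 : ℝ) * ‖(L : M2)‖ < 2 * r := by
        rw [h2]
        calc ‖((L : M2) - (A : M2)) + ((L : M2) - (B : M2))‖
            ≤ ‖(L : M2) - (A : M2)‖ + ‖(L : M2) - (B : M2)‖ := norm_add_le _ _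
          _ < r + r := by
              rw [← norm_neg ((L:M2) - (A:M2)), ← norm_neg ((L:M2) - (B:M2))]
              simp only [neg_sub]
              exact add_lt_add hA hB
          _ = 2 * r := by ring
      rw [hr] at h3; linarith
  classical
  have hsur : ∀ n, ∃ y : SL2C, (y : PSL2C) = x n := fun n => QuotientGroup.mk_surjective (x n)
  set X : ℕ → SL2C := fun n =>
    if h : x n ∈ (QuotientGroup.mk '' U : Set PSL2C) then h.choose else (hsur n).choose with hX
  have hXlift : ∀ n, (X n : PSL2C) = x n := by
    intro n
    by_cases h : x n ∈ (QuotientGroup.mk '' U : Set PSL2C)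
    · simp only [hX, dif_pos h]
      exact h.choose_spec.2
    · simp only [hX, dif_neg h]
      exact (hsur n).choose_spec
  refine ⟨X, hXlift, ?_⟩
  rw [tendsto_nhds]
  intro V hVopen hLV
  set W := V ∩ U with hW
  have hWopen : IsOpen W := hVopen.inter hUopen
  have hLW : L ∈ W := ⟨hLV, hLU⟩
  have himg : IsOpen (QuotientGroup.mk '' W : Set PSL2C) := QuotientGroup.isOpenMap_coe W hWopen
  have hmem : ℓ ∈ (QuotientGroup.mk '' W : Set PSL2C) := ⟨L, hLW, hL⟩
  have hev : ∀ᶠ n in atTop, x n ∈ (QuotientGroup.mk '' W : Set PSL2C) :=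
    hx.eventually (himg.mem_nhds hmem)
  filter_upwards [hev] with n hn
  have hnU : x n ∈ (QuotientGroup.mk '' U : Set PSL2C) := by
    obtain ⟨y, hyW, hy⟩ := hn
    exact ⟨y, hyW.2, hy⟩
  have hXU : X n ∈ U ∧ ((X n : PSL2C) = x n) := by
    constructor
    · simp only [hX, dif_pos hnU]
      exact hnU.choose_spec.1
    · exact hXlift n
  obtain ⟨y, hyW, hy⟩ := hn
  have : X n = y := key _ hXU.1 _ hyW.2 (by rw [hXU.2, hy])
  show X n ∈ V
  rw [this]
  exact hyW.1

lemma pair_dep {v w : Fin 2 → ℂ} (hv : v ≠ 0) (hM : ∀ c : ℂ, w ≠ c • v) :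
    LinearIndependent ℂ ![v, w] := by
  rw [linearIndependent_fin2]
  constructor
  · show w ≠ 0
    intro h; exact hM 0 (by simp [h])
  · intro a
    show a • w ≠ v
    intro h
    have ha : a ≠ 0 := by rintro rfl; simp at h; exact hv h.symm
    exact hM a⁻¹ (by rw [← h, smul_smul, inv_mul_cancel₀ ha, one_smul])

lemma eig_of_ker {h : M2} (hne : h ≠ 0) {v w : Fin 2 → ℂ} (hv : v ≠ 0)
    (hkv : h.mulVec v = 0) (hkw : h.mulVec w = 0) : ∃ c : ℂ, w = c • v := by
  by_contra hc
  push_neg at hc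
  have hli : LinearIndependent ℂ ![v, w] := pair_dep hv hc
  have hcard : Fintype.card (Fin 2) = Module.finrank ℂ (Fin 2 → ℂ) := by
    simp [Module.finrank_fin_fun]
  let b := basisOfLinearIndependentOfCardEqFinrank hli hcard
  have hb : ⇑b = ![v, w] := coe_basisOfLinearIndependentOfCardEqFinrank hli hcard
  have hall : ∀ u : Fin 2 → ℂ, h.mulVec u = 0 := by
    intro u
    have hrep := b.sum_repr u
    rw [← hrep]
    rw [Fin.sum_univ_two]
    rw [Matrix.mulVec_add, Matrix.mulVec_smul, Matrix.mulVec_smul]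
    have h0 : b 0 = v := by rw [hb]; rfl
    have h1 : b 1 = w := by rw [hb]; rfl
    rw [h0, h1, hkv, hkw]
    simp
  apply hne
  ext i j
  have := congrFun (hall (Pi.single j 1)) i
  rw [Matrix.mulVec_single] at this
  simpa using this

theorem psl2c_subconvergence_of_conjugations_converge
    (γ a b : ℕ → PSL2C) (ainf binf : PSL2C)
    (ha : Tendsto a atTop (𝓝 ainf)) (hb : Tendsto b atTop (𝓝 binf))
    (hlaxa : IsLoxodromic ainf) (hlaxb : IsLoxodromic binf)
    (hnofix : ¬ ∃ v : Fin 2 → ℂ, IsFixedDir ainf v ∧ IsFixedDir binf v)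
    (hca : ∃ A : PSL2C, Tendsto (fun n => γ n * a n * (γ n)⁻¹) atTop (𝓝 A))
    (hcb : ∃ B : PSL2C, Tendsto (fun n => γ n * b n * (γ n)⁻¹) atTop (𝓝 B)) :
    ∃ φ : ℕ → ℕ, StrictMono φ ∧ ∃ ginf : PSL2C,
      Tendsto (γ ∘ φ) atTop (𝓝 ginf) := by
  classical
  obtain ⟨A0, hA0, α, hαlift, hα⟩ := lift_tendsto a ainf ha
  obtain ⟨B0, hB0, β, hβlift, hβ⟩ := lift_tendsto b binf hb
  obtain ⟨Alim, hca'⟩ := hca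
  obtain ⟨Blim, hcb'⟩ := hcb
  obtain ⟨Abar, hAbar, C, hClift, hC⟩ := lift_tendsto _ _ hca'
  obtain ⟨Bbar, hBbar, D, hDlift, hD⟩ := lift_tendsto _ _ hcb'
  choose g hg using fun n => QuotientGroup.mk_surjective (γ n)
  -- sign relations
  have hrelC : ∀ n, ∃ s : ℂ, (s = 1 ∨ s = -1) ∧
      (g n : M2) * (α n : M2) = s • ((C n : M2) * (g n : M2)) := by
    intro n
    have h1 : ((g n * α n * (g n)⁻¹ : SL2C) : PSL2C) = (C n : PSL2C) := by
      rw [QuotientGroup.mk_mul, QuotientGroup.mk_mul, QuotientGroup.mk_inv, hg, hαlift, hClift]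
    have h2 : ((g n * α n * (g n)⁻¹ : SL2C) : M2) * (g n : M2) = (g n : M2) * (α n : M2) := by
      have e : (g n * α n * (g n)⁻¹) * g n = g n * α n := by group
      calc ((g n * α n * (g n)⁻¹ : SL2C) : M2) * (g n : M2)
          = (((g n * α n * (g n)⁻¹) * g n : SL2C) : M2) :=
            (Matrix.SpecialLinearGroup.coe_mul _ _).symm
        _ = ((g n * α n : SL2C) : M2) := by rw [e]
        _ = (g n : M2) * (α n : M2) := Matrix.SpecialLinearGroup.coe_mul _ _
    rcases coe_eq_coe.mp h1 with h | h
    · refine ⟨1, Or.inl rfl, ?_⟩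
      rw [one_smul, ← h2, h]
    · refine ⟨-1, Or.inr rfl, ?_⟩
      rw [neg_smul, one_smul, ← h2, h, Matrix.neg_mul]
  have hrelD : ∀ n, ∃ s : ℂ, (s = 1 ∨ s = -1) ∧
      (g n : M2) * (β n : M2) = s • ((D n : M2) * (g n : M2)) := by
    intro n
    have h1 : ((g n * β n * (g n)⁻¹ : SL2C) : PSL2C) = (D n : PSL2C) := by
      rw [QuotientGroup.mk_mul, QuotientGroup.mk_mul, QuotientGroup.mk_inv, hg, hβlift, hDlift]
    have h2 : ((g n * β n * (g n)⁻¹ : SL2C) : M2) * (g n : M2) = (g n : M2) * (β n : M2) := by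
      have e : (g n * β n * (g n)⁻¹) * g n = g n * β n := by group
      calc ((g n * β n * (g n)⁻¹ : SL2C) : M2) * (g n : M2)
          = (((g n * β n * (g n)⁻¹) * g n : SL2C) : M2) :=
            (Matrix.SpecialLinearGroup.coe_mul _ _).symm
        _ = ((g n * β n : SL2C) : M2) := by rw [e]
        _ = (g n : M2) * (β n : M2) := Matrix.SpecialLinearGroup.coe_mul _ _
    rcases coe_eq_coe.mp h1 with h | h
    · refine ⟨1, Or.inl rfl, ?_⟩
      rw [one_smul, ← h2, h]
    · refine ⟨-1, Or.inr rfl, ?_⟩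
      rw [neg_smul, one_smul, ← h2, h, Matrix.neg_mul]
  choose s hs1 hs2 using hrelC
  choose t ht1 ht2 using hrelD
  -- normalization
  haveI : ProperSpace M2 := FiniteDimensional.proper ℂ M2
  set r : ℕ → ℝ := fun n => ‖(g n : M2)‖ with hrdef
  have hrpos : ∀ n, 0 < r n := fun n => norm_pos_iff.mpr (sl2c_val_ne_zero (g n))
  have hrC : ∀ n, ((r n : ℝ) : ℂ) ≠ 0 := fun n => by
    simpa [Complex.ofReal_ne_zero] using (hrpos n).ne'
  set u : ℕ → M2 := fun n => (((r n : ℝ) : ℂ))⁻¹ • (g n : M2) with hudef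
  have hrnorm : ∀ n, ‖(((r n : ℝ)) : ℂ)‖ = r n := by
    intro n
    rw [Complex.norm_real, Real.norm_eq_abs, abs_of_pos (hrpos n)]
  have hunorm : ∀ n, ‖u n‖ = 1 := by
    intro n
    rw [hudef]
    simp only [norm_smul, norm_inv, hrnorm]
    exact inv_mul_cancel₀ (hrpos n).ne'
  -- subsequence extraction
  obtain ⟨h, hhs, φ₁, hφ₁, hu1⟩ := (isCompact_sphere (0 : M2) 1).tendsto_subseq
    (fun n => mem_sphere_zero_iff_norm.mpr (hunorm n))
  have hsigncpt : IsCompact ({1, -1} : Set ℂ) := (Set.toFinite _).isCompact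
  have hsmem : ∀ n, s n ∈ ({1, -1} : Set ℂ) := by
    intro n; rcases hs1 n with h' | h' <;> simp [h']
  have htmem : ∀ n, t n ∈ ({1, -1} : Set ℂ) := by
    intro n; rcases ht1 n with h' | h' <;> simp [h']
  obtain ⟨ε, hεmem, φ₂, hφ₂, hs'⟩ := hsigncpt.tendsto_subseq (fun k => hsmem (φ₁ k))
  obtain ⟨δ, hδmem, φ₃, hφ₃, ht'⟩ := hsigncpt.tendsto_subseq (fun k => htmem (φ₁ (φ₂ k)))
  set φ : ℕ → ℕ := φ₁ ∘ φ₂ ∘ φ₃ with hφdef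
  have hφ : StrictMono φ := hφ₁.comp (hφ₂.comp hφ₃)
  refine ⟨φ, hφ, ?_⟩
  -- limits along φ
  have huφ : Tendsto (fun k => u (φ k)) atTop (𝓝 h) :=
    hu1.comp ((hφ₂.comp hφ₃).tendsto_atTop)
  have hsφ : Tendsto (fun k => s (φ k)) atTop (𝓝 ε) :=
    hs'.comp (hφ₃.tendsto_atTop)
  have htφ : Tendsto (fun k => t (φ k)) atTop (𝓝 δ) :=
    ht'
  have hαv : Tendsto (fun n => (α n : M2)) atTop (𝓝 (A0 : M2)) :=
    (cont_val.tendsto A0).comp hα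
  have hβv : Tendsto (fun n => (β n : M2)) atTop (𝓝 (B0 : M2)) :=
    (cont_val.tendsto B0).comp hβ
  have hCv : Tendsto (fun n => (C n : M2)) atTop (𝓝 (Abar : M2)) :=
    (cont_val.tendsto Abar).comp hC
  have hDv : Tendsto (fun n => (D n : M2)) atTop (𝓝 (Bbar : M2)) :=
    (cont_val.tendsto Bbar).comp hD
  have hαφ : Tendsto (fun k => (α (φ k) : M2)) atTop (𝓝 (A0 : M2)) :=
    hαv.comp hφ.tendsto_atTop
  have hβφ : Tendsto (fun k => (β (φ k) : M2)) atTop (𝓝 (B0 : M2)) :=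
    hβv.comp hφ.tendsto_atTop
  have hCφ : Tendsto (fun k => (C (φ k) : M2)) atTop (𝓝 (Abar : M2)) :=
    hCv.comp hφ.tendsto_atTop
  have hDφ : Tendsto (fun k => (D (φ k) : M2)) atTop (𝓝 (Bbar : M2)) :=
    hDv.comp hφ.tendsto_atTop
  -- normalized relations
  have hrelu : ∀ n, u n * (α n : M2) = s n • ((C n : M2) * u n) := by
    intro n
    rw [hudef]
    rw [smul_mul_assoc, hs2 n, smul_comm, mul_smul_comm]
  have hrelv : ∀ n, u n * (β n : M2) = t n • ((D n : M2) * u n) := by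
    intro n
    rw [hudef]
    rw [smul_mul_assoc, ht2 n, smul_comm, mul_smul_comm]
  -- limit equations
  have heqA : h * (A0 : M2) = ε • ((Abar : M2) * h) := by
    have l1 : Tendsto (fun k => u (φ k) * (α (φ k) : M2)) atTop (𝓝 (h * (A0 : M2))) :=
      huφ.mul hαφ
    have l2 : Tendsto (fun k => s (φ k) • ((C (φ k) : M2) * u (φ k))) atTop
        (𝓝 (ε • ((Abar : M2) * h))) := hsφ.smul (hCφ.mul huφ)
    have : (fun k => u (φ k) * (α (φ k) : M2))
        = fun k => s (φ k) • ((C (φ k) : M2) * u (φ k)) := funext fun k => hrelu (φ k)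
    rw [this] at l1
    exact tendsto_nhds_unique l1 l2
  have heqB : h * (B0 : M2) = δ • ((Bbar : M2) * h) := by
    have l1 : Tendsto (fun k => u (φ k) * (β (φ k) : M2)) atTop (𝓝 (h * (B0 : M2))) :=
      huφ.mul hβφ
    have l2 : Tendsto (fun k => t (φ k) • ((D (φ k) : M2) * u (φ k))) atTop
        (𝓝 (δ • ((Bbar : M2) * h))) := htφ.smul (hDφ.mul huφ)
    have : (fun k => u (φ k) * (β (φ k) : M2))
        = fun k => t (φ k) • ((D (φ k) : M2) * u (φ k)) := funext fun k => hrelv (φ k)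
    rw [this] at l1
    exact tendsto_nhds_unique l1 l2
  have hne : h ≠ 0 := by
    intro h0
    have := mem_sphere_zero_iff_norm.mp hhs
    rw [h0] at this
    simp at this
  -- det h ≠ 0
  have hdet : h.det ≠ 0 := by
    intro hdet0
    obtain ⟨v, hv, hker⟩ := Matrix.exists_mulVec_eq_zero_iff.mpr hdet0
    have hA' : h.mulVec ((A0 : M2).mulVec v) = 0 := by
      rw [Matrix.mulVec_mulVec, heqA, Matrix.smul_mulVec, ← Matrix.mulVec_mulVec,
        hker, Matrix.mulVec_zero, smul_zero]
    have hB' : h.mulVec ((B0 : M2).mulVec v) = 0 := by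
      rw [Matrix.mulVec_mulVec, heqB, Matrix.smul_mulVec, ← Matrix.mulVec_mulVec,
        hker, Matrix.mulVec_zero, smul_zero]
    obtain ⟨c, hc⟩ := eig_of_ker hne hv hker hA'
    obtain ⟨c', hc'⟩ := eig_of_ker hne hv hker hB'
    exact hnofix ⟨v, ⟨hv, A0, hA0, c, hc⟩, ⟨hv, B0, hB0, c', hc'⟩⟩
  -- determinant limit gives convergence of the norms
  have hdetu : ∀ n, (u n).det = ((((r n)⁻¹ ^ 2 : ℝ)) : ℂ) := by
    intro n
    rw [hudef]
    show ((((r n : ℝ) : ℂ))⁻¹ • (g n : M2)).det = _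
    rw [Matrix.det_smul, (g n).prop, mul_one, Fintype.card_fin]
    push_cast
    ring
  have hdetlim : Tendsto (fun k => (u (φ k)).det) atTop (𝓝 h.det) :=
    ((continuous_id.matrix_det).tendsto h).comp huφ
  have hdetlim' : Tendsto (fun k => ((((r (φ k))⁻¹ ^ 2 : ℝ)) : ℂ)) atTop (𝓝 h.det) := by
    have : (fun k => (u (φ k)).det) = fun k => ((((r (φ k))⁻¹ ^ 2 : ℝ)) : ℂ) :=
      funext fun k => hdetu (φ k)
    rwa [this] at hdetlim
  have hre : Tendsto (fun k => (r (φ k))⁻¹ ^ 2) atTop (𝓝 h.det.re) := by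
    have h2 := (Complex.continuous_re.tendsto h.det).comp hdetlim'
    have e : (fun k => (r (φ k))⁻¹ ^ 2)
        = Complex.re ∘ (fun k => ((((r (φ k))⁻¹ ^ 2 : ℝ)) : ℂ)) := funext fun k => (Complex.ofReal_re _).symm
    rw [e]; exact h2
  have him : h.det.im = 0 := by
    have := (Complex.continuous_im.tendsto h.det).comp hdetlim'
    simp only [Function.comp_def, Complex.ofReal_im] at this
    exact tendsto_nhds_unique this tendsto_const_nhds
  set ρ : ℝ := h.det.re with hρdef
  have hdeteq : h.det = ((ρ : ℝ) : ℂ) := Complex.ext (by simp [hρdef]) (by simp [him])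
  have hρne : ρ ≠ 0 := by
    intro h0
    apply hdet
    rw [hdeteq, h0]
    simp
  have hρnonneg : 0 ≤ ρ := ge_of_tendsto' hre fun k => by positivity
  have hρpos : 0 < ρ := lt_of_le_of_ne hρnonneg (Ne.symm hρne)
  set sR : ℝ := Real.sqrt ρ⁻¹ with hsRdef
  have hr2 : Tendsto (fun k => r (φ k)) atTop (𝓝 sR) := by
    have e : ∀ k, r (φ k) = Real.sqrt (((r (φ k))⁻¹ ^ 2)⁻¹) := by
      intro k
      rw [inv_pow, inv_inv, Real.sqrt_sq (hrpos (φ k)).le]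
    have cont : Tendsto (fun k => Real.sqrt (((r (φ k))⁻¹ ^ 2)⁻¹)) atTop (𝓝 sR) :=
      (Real.continuous_sqrt.tendsto _).comp (hre.inv₀ hρne)
    have : (fun k => r (φ k)) = fun k => Real.sqrt (((r (φ k))⁻¹ ^ 2)⁻¹) := funext e
    rwa [this]
  set H : M2 := ((sR : ℝ) : ℂ) • h with hHdef
  have hgconv : Tendsto (fun k => (g (φ k) : M2)) atTop (𝓝 H) := by
    have e : ∀ n, (g n : M2) = (((r n : ℝ)) : ℂ) • u n := by
      intro n
      rw [hudef, smul_inv_smul₀ (hrC n)]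
    have cr : Tendsto (fun k => (((r (φ k) : ℝ)) : ℂ)) atTop (𝓝 ((sR : ℝ) : ℂ)) :=
      (Complex.continuous_ofReal.tendsto _).comp hr2
    have : (fun k => (g (φ k) : M2)) = fun k => (((r (φ k) : ℝ)) : ℂ) • u (φ k) :=
      funext fun k => e (φ k)
    rw [this]
    exact cr.smul huφ
  have hsR2 : sR ^ 2 = ρ⁻¹ := Real.sq_sqrt (inv_nonneg.mpr hρpos.le)
  have hdetH : H.det = 1 := by
    rw [hHdef, Matrix.det_smul, hdeteq]
    have : ((sR : ℝ) : ℂ) ^ Fintype.card (Fin 2) = ((ρ⁻¹ : ℝ) : ℂ) := by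
      rw [Fintype.card_fin]
      push_cast [← hsR2]
      ring
    rw [this, ← Complex.ofReal_mul, inv_mul_cancel₀ hρne]
    simp
  set Ginf : SL2C := ⟨H, hdetH⟩ with hGdef
  have hsl : Tendsto (fun k => g (φ k)) atTop (𝓝 Ginf) := by
    refine tendsto_subtype_rng.mpr ?_
    exact hgconv
  refine ⟨(Ginf : PSL2C), ?_⟩
  have : γ ∘ φ = fun k => ((g (φ k) : SL2C) : PSL2C) := funext fun k => (hg (φ k)).symm
  rw [this]
  exact ((QuotientGroup.continuous_mk).tendsto Ginf).comp hsl
end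

section
/- The area of any geodesic triangle in the hyperbolic plane is strictly less than the length of each of its edges (provided the edge has positive length). -/
/-!
STATEMENT 2.  The area of a geodesic triangle in the hyperbolic plane is
strictly less than the length of each of its (positive-length) edges.

A hyperbolic triangle with side lengths `a, b, c > 0` and opposite interior
angles `α, β, γ ∈ [0, π]` is characterized by the hyperbolic law of cosines
(`cosh a = cosh b cosh c − sinh b sinh c cos α`, and cyclically).  By
Gauss–Bonnet its area is `π − (α + β + γ)`.
-/

open Real

/-- `sinh x ≤ x * cosh x` for `0 ≤ x`. -/
private lemma aux_sinh_le_mul_cosh {x : ℝ} (hx : 0 ≤ x) : Real.sinh x ≤ x * Real.cosh x := by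
  have hder : ∀ y : ℝ, HasDerivAt (fun t : ℝ => t * Real.cosh t - Real.sinh t)
      (y * Real.sinh y) y := by
    intro y
    have h1 := ((hasDerivAt_id y).mul (Real.hasDerivAt_cosh y)).sub (Real.hasDerivAt_sinh y)
    refine h1.congr_deriv ?_
    simp [id]
  have hmono : Monotone (fun t : ℝ => t * Real.cosh t - Real.sinh t) := by
    apply monotone_of_deriv_nonneg
    · exact fun y => (hder y).differentiableAt
    · intro y
      rw [(hder y).deriv]
      rcases le_or_gt 0 y with hy | hy
      · exact mul_nonneg hy (by simpa using Real.sinh_nonneg_iff.mpr hy)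
      · have : Real.sinh y ≤ 0 := by
          have := Real.sinh_lt_sinh.mpr hy
          simpa using this.le
        exact mul_nonneg_iff.mpr (Or.inr ⟨hy.le, this⟩)
  have := hmono hx
  simpa using this

/-- `cos x * cosh x < 1` for `0 < x ≤ π/2`. -/
private lemma aux_cos_mul_cosh_lt_one {x : ℝ} (h0 : 0 < x) (h2 : x ≤ π / 2) :
    Real.cos x * Real.cosh x < 1 := by
  have hder : ∀ y : ℝ, HasDerivAt (fun t : ℝ => 1 - Real.cos t * Real.cosh t)
      (Real.sin y * Real.cosh y - Real.cos y * Real.sinh y) y := by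
    intro y
    have h1 := ((Real.hasDerivAt_cos y).mul (Real.hasDerivAt_cosh y)).const_sub 1
    refine h1.congr_deriv ?_
    ring
  have hmono : StrictMonoOn (fun t : ℝ => 1 - Real.cos t * Real.cosh t) (Set.Icc 0 (π / 2)) := by
    apply strictMonoOn_of_deriv_pos (convex_Icc 0 (π / 2))
    · exact (continuous_const.sub (Real.continuous_cos.mul Real.continuous_cosh)).continuousOn
    · intro y hy
      rw [interior_Icc] at hy
      rw [(hder y).deriv]
      have hcp : 0 < Real.cos y :=
        Real.cos_pos_of_mem_Ioo ⟨by linarith [Real.pi_pos, hy.1], hy.2⟩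
      have ht : y * Real.cos y < Real.sin y := by
        have h := Real.lt_tan hy.1 hy.2
        rw [Real.tan_eq_sin_div_cos] at h
        calc y * Real.cos y < (Real.sin y / Real.cos y) * Real.cos y :=
              mul_lt_mul_of_pos_right h hcp
          _ = Real.sin y := by field_simp
      have hs := aux_sinh_le_mul_cosh hy.1.le
      nlinarith [Real.cosh_pos y, mul_le_mul_of_nonneg_left hs hcp.le,
        mul_lt_mul_of_pos_right ht (Real.cosh_pos y)]
  have h := hmono (Set.left_mem_Icc.mpr (by linarith [Real.pi_pos])) ⟨h0.le, h2⟩ h0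
  simpa using h

set_option maxHeartbeats 1000000 in
/-- Key lemma: the defect is less than the side `a`. -/
private lemma aux_defect_lt_side (a b c α β γ : ℝ)
    (ha : 0 < a) (hb : 0 < b) (hc : 0 < c)
    (hα : 0 ≤ α) (hβ : 0 ≤ β) (hγ : 0 ≤ γ)
    (hα' : α ≤ π) (hβ' : β ≤ π) (hγ' : γ ≤ π)
    (lawA : Real.cosh a = Real.cosh b * Real.cosh c - Real.sinh b * Real.sinh c * Real.cos α)
    (lawB : Real.cosh b = Real.cosh c * Real.cosh a - Real.sinh c * Real.sinh a * Real.cos β)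
    (lawC : Real.cosh c = Real.cosh a * Real.cosh b - Real.sinh a * Real.sinh b * Real.cos γ) :
    π - (α + β + γ) < a := by
  rcases lt_or_ge π a with haπ | haπ
  · -- trivial case `a > π`
    linarith
  -- main case `0 < a ≤ π`
  set A := Real.cosh a with hAdef
  set B := Real.cosh b with hBdef
  set C := Real.cosh c with hCdef
  set sa := Real.sinh a with hsadef
  set sb := Real.sinh b with hsbdef
  set sc := Real.sinh c with hscdef
  have hA1 : 1 < A := Real.one_lt_cosh.mpr ha.ne'
  have hB1 : 1 < B := Real.one_lt_cosh.mpr hb.ne'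
  have hC1 : 1 < C := Real.one_lt_cosh.mpr hc.ne'
  have hsa : 0 < sa := Real.sinh_pos_iff.mpr ha
  have hsb : 0 < sb := Real.sinh_pos_iff.mpr hb
  have hsc : 0 < sc := Real.sinh_pos_iff.mpr hc
  have ha2 : sa ^ 2 = A ^ 2 - 1 := Real.sinh_sq a
  have hb2 : sb ^ 2 = B ^ 2 - 1 := Real.sinh_sq b
  have hc2 : sc ^ 2 = C ^ 2 - 1 := Real.sinh_sq c
  have e1 : sb * sc * Real.cos α = B * C - A := by linarith
  have e2 : sc * sa * Real.cos β = C * A - B := by linarith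
  have e3 : sa * sb * Real.cos γ = A * B - C := by linarith
  set s := sb * sc * Real.sin α with hsdef
  have hs2 : s ^ 2 = 1 - A ^ 2 - B ^ 2 - C ^ 2 + 2 * A * B * C := by
    have hpy := Real.sin_sq_add_cos_sq α
    have : s ^ 2 = sb ^ 2 * sc ^ 2 * (Real.sin α ^ 2) := by rw [hsdef]; ring
    rw [this]
    linear_combination sb ^ 2 * sc ^ 2 * hpy - (sb * sc * Real.cos α + (B * C - A)) * e1 +
      (C ^ 2 - 1) * hb2 + sb ^ 2 * hc2
  -- the other two "sine" products equal `s`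
  have hsβ : sc * sa * Real.sin β = s := by
    have hsq : (sc * sa * Real.sin β) ^ 2 = s ^ 2 := by
      have hpy := Real.sin_sq_add_cos_sq β
      rw [hs2]
      linear_combination sc ^ 2 * sa ^ 2 * hpy - (sc * sa * Real.cos β + (C * A - B)) * e2 +
        (A ^ 2 - 1) * hc2 + sc ^ 2 * ha2
    exact (pow_left_inj₀
      (mul_nonneg (mul_nonneg hsc.le hsa.le) (Real.sin_nonneg_of_nonneg_of_le_pi hβ hβ'))
      (mul_nonneg (mul_nonneg hsb.le hsc.le) (Real.sin_nonneg_of_nonneg_of_le_pi hα hα'))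
      two_ne_zero).mp hsq
  have hsγ : sa * sb * Real.sin γ = s := by
    have hsq : (sa * sb * Real.sin γ) ^ 2 = s ^ 2 := by
      have hpy := Real.sin_sq_add_cos_sq γ
      rw [hs2]
      linear_combination sa ^ 2 * sb ^ 2 * hpy - (sa * sb * Real.cos γ + (A * B - C)) * e3 +
        (B ^ 2 - 1) * ha2 + sa ^ 2 * hb2
    exact (pow_left_inj₀
      (mul_nonneg (mul_nonneg hsa.le hsb.le) (Real.sin_nonneg_of_nonneg_of_le_pi hγ hγ'))
      (mul_nonneg (mul_nonneg hsb.le hsc.le) (Real.sin_nonneg_of_nonneg_of_le_pi hα hα'))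
      two_ne_zero).mp hsq
  -- explicit formulas for the cosines and sines
  have fc1 : Real.cos α = (B * C - A) / (sb * sc) := by
    field_simp
    linear_combination e1
  have fc2 : Real.cos β = (C * A - B) / (sc * sa) := by
    field_simp
    linear_combination e2
  have fc3 : Real.cos γ = (A * B - C) / (sa * sb) := by
    field_simp
    linear_combination e3
  have fs1 : Real.sin α = s / (sb * sc) := by
    field_simp
    linear_combination -hsdef
  have fs2 : Real.sin β = s / (sc * sa) := by
    field_simp
    linear_combination hsβ
  have fs3 : Real.sin γ = s / (sa * sb) := by
    field_simp
    linear_combination hsγ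
  -- the cosine of the angle sum
  have hcos : Real.cos (α + β + γ) * ((A ^ 2 - 1) * ((B ^ 2 - 1) * (C ^ 2 - 1)))
      = (B * C - A) * ((C * A - B) * (A * B - C))
        - s ^ 2 * ((B * C - A) + (C * A - B) + (A * B - C)) := by
    have hE : (A ^ 2 - 1) * ((B ^ 2 - 1) * (C ^ 2 - 1)) = sa ^ 2 * (sb ^ 2 * sc ^ 2) := by
      rw [ha2, hb2, hc2]
    rw [hE, Real.cos_add, Real.cos_add, Real.sin_add, fc1, fc2, fc3, fs1, fs2, fs3]
    field_simp
    ring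
  -- the key polynomial inequality
  have key2 : (3 - A) * ((A ^ 2 - 1) * ((B ^ 2 - 1) * (C ^ 2 - 1)))
      ≤ (1 + A) * (s ^ 2 * ((B * C - A) + (C * A - B) + (A * B - C))
          - (B * C - A) * ((C * A - B) * (A * B - C))) := by
    have hGpos : 0 ≤ (1 + A) * ((A - 1) * ((B - 1) * ((C - 1) *
        ((B - C) ^ 2 + (A - 1) * (A + 2 * B + 2 * C + 3))))) := by
      have h1 : (0:ℝ) ≤ A - 1 := by linarith
      have h2 : (0:ℝ) ≤ B - 1 := by linarith
      have h3 : (0:ℝ) ≤ C - 1 := by linarith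
      have h4 : (0:ℝ) ≤ (B - C) ^ 2 + (A - 1) * (A + 2 * B + 2 * C + 3) :=
        add_nonneg (sq_nonneg _) (mul_nonneg h1 (by linarith))
      have h5 : (0:ℝ) ≤ 1 + A := by linarith
      exact mul_nonneg h5 (mul_nonneg h1 (mul_nonneg h2 (mul_nonneg h3 h4)))
    have hid : (1 + A) * (s ^ 2 * ((B * C - A) + (C * A - B) + (A * B - C))
          - (B * C - A) * ((C * A - B) * (A * B - C)))
        - (3 - A) * ((A ^ 2 - 1) * ((B ^ 2 - 1) * (C ^ 2 - 1)))
        = (1 + A) * ((A - 1) * ((B - 1) * ((C - 1) *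
          ((B - C) ^ 2 + (A - 1) * (A + 2 * B + 2 * C + 3))))) := by
      linear_combination ((1 + A) * ((B * C - A) + (C * A - B) + (A * B - C))) * hs2
    linarith [hGpos, hid]
  -- combine
  have hEpos : 0 < (A ^ 2 - 1) * ((B ^ 2 - 1) * (C ^ 2 - 1)) := by
    have h1 : (0:ℝ) < A ^ 2 - 1 := sub_pos.mpr (one_lt_pow₀ hA1 two_ne_zero)
    have h2 : (0:ℝ) < B ^ 2 - 1 := sub_pos.mpr (one_lt_pow₀ hB1 two_ne_zero)
    have h3 : (0:ℝ) < C ^ 2 - 1 := sub_pos.mpr (one_lt_pow₀ hC1 two_ne_zero)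
    exact mul_pos h1 (mul_pos h2 h3)
  have h4 : s ^ 2 * ((B * C - A) + (C * A - B) + (A * B - C))
      - (B * C - A) * ((C * A - B) * (A * B - C))
      = -(Real.cos (α + β + γ) * ((A ^ 2 - 1) * ((B ^ 2 - 1) * (C ^ 2 - 1)))) := by
    linarith [hcos]
  have h5 : (3 - A) * ((A ^ 2 - 1) * ((B ^ 2 - 1) * (C ^ 2 - 1)))
      ≤ (-((1 + A) * Real.cos (α + β + γ))) * ((A ^ 2 - 1) * ((B ^ 2 - 1) * (C ^ 2 - 1))) := by
    calc (3 - A) * ((A ^ 2 - 1) * ((B ^ 2 - 1) * (C ^ 2 - 1)))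
        ≤ (1 + A) * (s ^ 2 * ((B * C - A) + (C * A - B) + (A * B - C))
          - (B * C - A) * ((C * A - B) * (A * B - C))) := key2
      _ = (-((1 + A) * Real.cos (α + β + γ))) * ((A ^ 2 - 1) * ((B ^ 2 - 1) * (C ^ 2 - 1))) := by
          rw [h4]; ring
  have h6 : 3 - A ≤ -((1 + A) * Real.cos (α + β + γ)) :=
    le_of_mul_le_mul_right h5 hEpos
  clear key2 h4 h5 hcos fc1 fc2 fc3 fs1 fs2 fs3 hs2 hsβ hsγ e1 e2 e3 ha2 hb2 hc2 lawA lawB lawC hEpos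
  -- the scalar inequality `cos a * (1 + A) < 3 - A`
  have hI : Real.cos a * (1 + A) < 3 - A := by
    have h7 : Real.cos (a / 2) * Real.cosh (a / 2) < 1 :=
      aux_cos_mul_cosh_lt_one (by linarith) (by linarith)
    have hc2a : Real.cos a = 2 * Real.cos (a / 2) ^ 2 - 1 := by
      have := Real.cos_two_mul (a / 2)
      rw [show 2 * (a / 2) = a by ring] at this
      linarith
    have hch2a : A = 2 * Real.cosh (a / 2) ^ 2 - 1 := by
      have h8 := Real.cosh_two_mul (a / 2)
      have h9 := Real.sinh_sq (a / 2)
      rw [show 2 * (a / 2) = a by ring] at h8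
      rw [hAdef]
      linarith
    have hx0 : 0 ≤ Real.cos (a / 2) :=
      Real.cos_nonneg_of_mem_Icc ⟨by linarith [Real.pi_pos], by linarith⟩
    have hy0 : 0 < Real.cosh (a / 2) := Real.cosh_pos _
    nlinarith [h7, mul_nonneg hx0 hy0.le]
  have h8 : Real.cos a < -Real.cos (α + β + γ) := by nlinarith [h6, hI, hA1]
  -- conclude using the strict antitonicity of `cos` on `[0, π]`
  by_contra hcon
  push_neg at hcon
  have hδ0 : 0 < π - (α + β + γ) := lt_of_lt_of_le ha hcon
  have hδπ : π - (α + β + γ) ≤ π := by linarith [add_nonneg (add_nonneg hα hβ) hγ]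
  have hle : Real.cos (π - (α + β + γ)) ≤ Real.cos a := by
    rcases eq_or_lt_of_le hcon with h | h
    · rw [← h]
    · exact (Real.strictAntiOn_cos ⟨ha.le, haπ⟩ ⟨hδ0.le, hδπ⟩ h).le
  rw [Real.cos_pi_sub] at hle
  linarith

theorem hyperbolic_triangle_area_lt_side_lengths
    (a b c α β γ : ℝ)
    (ha : 0 < a) (hb : 0 < b) (hc : 0 < c)
    (hα : 0 ≤ α) (hβ : 0 ≤ β) (hγ : 0 ≤ γ)
    (hα' : α ≤ π) (hβ' : β ≤ π) (hγ' : γ ≤ π)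
    (lawA : Real.cosh a = Real.cosh b * Real.cosh c - Real.sinh b * Real.sinh c * Real.cos α)
    (lawB : Real.cosh b = Real.cosh c * Real.cosh a - Real.sinh c * Real.sinh a * Real.cos β)
    (lawC : Real.cosh c = Real.cosh a * Real.cosh b - Real.sinh a * Real.sinh b * Real.cos γ) :
    π - (α + β + γ) < a ∧ π - (α + β + γ) < b ∧ π - (α + β + γ) < c := by
  refine ⟨?_, ?_, ?_⟩
  · exact aux_defect_lt_side a b c α β γ ha hb hc hα hβ hγ hα' hβ' hγ' lawA lawB lawC
  · have := aux_defect_lt_side b c a β γ α hb hc ha hβ hγ hα hβ' hγ' hα' lawB lawC lawA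
    linarith
  · have := aux_defect_lt_side c a b γ α β hc ha hb hγ hα hβ hγ' hα' hβ' lawC lawA lawB
    linarith
end
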